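/- Let f ∈ C²(ℝ₊,ℝ) and define g(C) = f(det C) on the set PSym(n) of real symmetric positive definite n×n matrices. Then for every C ∈ PSym(n) and every symmetric matrix H, the second Fréchet derivative satisfies D²g(C).(H,H) = det(C)·{ [f''(det C)·det(C) + f'(det C)]·⟨C⁻¹,H⟩² − f'(det C)·⟨HC⁻¹, C⁻¹H⟩ }. -/

import Mathlib

open Matrix

attribute [local instance] Matrix.frobeniusNormedAddCommGroup Matrix.frobeniusNormedSpace

/-- The trace inner product `⟨A, B⟩ = tr (A Bᵀ)` on real `n × n` matrices. -/
noncomputable def tinner {n : ℕ} (A B : Matrix (Fin n) (Fin n) ℝ) : ℝ :=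
  (A * Bᵀ).trace

namespace SFDAux

attribute [local instance] Matrix.frobeniusNormedRing Matrix.frobeniusNormedAlgebra

variable {n : ℕ}

abbrev E (n : ℕ) := Matrix (Fin n) (Fin n) ℝ

noncomputable instance instTopE : TopologicalSpace (E n) :=
  @UniformSpace.toTopologicalSpace (E n) (@PseudoMetricSpace.toUniformSpace (E n)
    (@SeminormedAddCommGroup.toPseudoMetricSpace (E n)
      (@NormedAddCommGroup.toSeminormedAddCommGroup (E n) Matrix.frobeniusNormedAddCommGroup)))

/-- `H ↦ tr (A * H)` as a continuous linear map. -/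
noncomputable def T1 (A : E n) : E n →L[ℝ] ℝ :=
  LinearMap.toContinuousLinearMap
    { toFun := fun H => (A * H).trace
      map_add' := by intro x y; simp [Matrix.mul_add]
      map_smul' := by intro c x; simp [Matrix.mul_smul] }

@[simp] lemma T1_apply (A H : E n) : T1 A H = (A * H).trace := rfl

/-- `A ↦ (H ↦ tr (A * H))` as a continuous linear map. -/
noncomputable def T : E n →L[ℝ] E n →L[ℝ] ℝ :=
  LinearMap.toContinuousLinearMap
    { toFun := T1
      map_add' := by intro x y; ext H; simp [Matrix.add_mul]
      map_smul' := by intro c x; ext H; simp [Matrix.smul_mul] }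

@[simp] lemma T_apply (A H : E n) : T A H = (A * H).trace := rfl

/-- Determinant as a continuous multilinear map on the rows. -/
noncomputable def detCM (n : ℕ) : ContinuousMultilinearMap ℝ (fun _ : Fin n => (Fin n → ℝ)) ℝ :=
  { (Matrix.detRowAlternating : (Fin n → ℝ) [⋀^Fin n]→ₗ[ℝ] ℝ).toMultilinearMap with
    cont := by
      show Continuous fun x : Fin n → Fin n → ℝ => Matrix.det (Matrix.of x)
      exact Continuous.matrix_det continuous_id }

noncomputable def eL (n : ℕ) : E n →L[ℝ] (Fin n → Fin n → ℝ) :=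
  LinearMap.toContinuousLinearMap (LinearMap.id (R := ℝ) (M := E n))

lemma sum_det_updateRow (X H : E n) :
    ∑ i, (X.updateRow i (H i)).det = (X.adjugate * H).trace := by
  have row : ∀ i, (X.updateRow i (H i)).det = ∑ j, X.adjugate j i * H i j := by
    intro i
    rw [← Matrix.det_transpose, ← Matrix.updateCol_transpose, ← Matrix.cramer_apply,
      Matrix.cramer_eq_adjugate_mulVec]
    simp [Matrix.mulVec, dotProduct, ← Matrix.adjugate_transpose, mul_comm]
  simp only [row, Matrix.trace, Matrix.diag, Matrix.mul_apply]
  exact Finset.sum_comm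

lemma hasFDerivAt_det (X : E n) :
    HasFDerivAt (fun Y : E n => Y.det) (T X.adjugate) X := by
  have hM : HasFDerivAt (detCM n) ((detCM n).linearDeriv (eL n X)) (eL n X) :=
    (detCM n).hasFDerivAt (eL n X)
  have h := hM.comp X (eL n).hasFDerivAt
  have hfun : (fun Y : E n => Y.det) = (fun Y : E n => detCM n (eL n Y)) := rfl
  have hder : ((detCM n).linearDeriv (eL n X)).comp (eL n) = T X.adjugate := by
    ext H
    have : ∀ i, Function.update (eL n X) i (eL n H i) = X.updateRow i (H i) := by
      intro i; rfl
    simp only [ContinuousLinearMap.comp_apply,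
      ContinuousMultilinearMap.linearDeriv_apply, this, T_apply]
    have : ∀ i, detCM n (X.updateRow i (H i)) = (X.updateRow i (H i)).det := fun _ => rfl
    simp only [this]
    exact sum_det_updateRow X H
  rw [hfun, ← hder]
  exact h

lemma adjugate_eq_det_smul_inv (X : E n) (h : IsUnit X.det) :
    X.adjugate = X.det • X⁻¹ := by
  rw [Matrix.inv_def, smul_smul, Ring.inverse_eq_inv']
  rw [mul_inv_cancel₀ h.ne_zero, one_smul]

/-- candidate first derivative -/
noncomputable def D (f : ℝ → ℝ) (X : E n) : E n →L[ℝ] ℝ :=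
  (deriv f X.det * X.det) • T (Ring.inverse X)

lemma hasFDerivAt_g (f : ℝ → ℝ) (hf : ContDiffOn ℝ 2 f (Set.Ioi 0)) (X : E n)
    (hX : 0 < X.det) :
    HasFDerivAt (fun Y : E n => f Y.det) (D f X) X := by
  have hXd : X.det ∈ Set.Ioi (0:ℝ) := hX
  have hd : HasDerivAt f (deriv f X.det) X.det := by
    have := ((hf.differentiableOn (by norm_num)) X.det hXd).differentiableAt
      (Ioi_mem_nhds hX)
    exact this.hasDerivAt
  have h := hd.comp_hasFDerivAt X (hasFDerivAt_det X)
  have hu : IsUnit X.det := isUnit_iff_ne_zero.mpr hX.ne'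
  have : deriv f X.det • T X.adjugate = D f X := by
    rw [adjugate_eq_det_smul_inv X hu, Matrix.nonsing_inv_eq_ringInverse, _root_.map_smul]
    rw [smul_smul, D, mul_comm]
  rw [← this]
  exact h

lemma fderiv_fderiv_g (f : ℝ → ℝ) (hf : ContDiffOn ℝ 2 f (Set.Ioi 0)) (C : E n)
    (hC : 0 < C.det) (H : E n) :
    fderiv ℝ (fderiv ℝ (fun Y : E n => f Y.det)) C H H =
      C.det * ((deriv (deriv f) C.det * C.det + deriv f C.det) * ((C⁻¹ * H).trace) ^ 2
        - deriv f C.det * (C⁻¹ * H * (C⁻¹ * H)).trace) := by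
  have hdu : IsUnit C.det := isUnit_iff_ne_zero.mpr hC.ne'
  have hCu : IsUnit C := (Matrix.isUnit_iff_isUnit_det C).mpr hdu
  set u := hCu.unit with hu_def
  have hu1 : (↑u : E n) = C := hCu.unit_spec
  have hui : (↑u⁻¹ : E n) = C⁻¹ := by
    rw [Matrix.nonsing_inv_eq_ringInverse, ← hu1, Ring.inverse_unit]
  -- continuity of det, openness of the set of positive determinant
  have hcont : Continuous fun Y : E n => Y.det :=
    continuous_iff_continuousAt.2 fun X => (hasFDerivAt_det X).continuousAt
  have hopen : IsOpen {X : E n | 0 < X.det} := isOpen_lt continuous_const hcont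
  have heq : fderiv ℝ (fun Y : E n => f Y.det) =ᶠ[nhds C] D f :=
    Filter.eventuallyEq_of_mem (hopen.mem_nhds hC)
      (fun X hX => (hasFDerivAt_g f hf X hX).fderiv)
  rw [heq.fderiv_eq]
  -- derivatives of the pieces
  have hdet := hasFDerivAt_det C
  have hd : HasDerivAt f (deriv f C.det) C.det :=
    (((hf.differentiableOn (by norm_num)) C.det hC).differentiableAt
      (Ioi_mem_nhds hC)).hasDerivAt
  have hf' : ContDiffOn ℝ 1 (deriv f) (Set.Ioi 0) :=
    hf.deriv_of_isOpen isOpen_Ioi (by norm_num)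
  have hdd : HasDerivAt (deriv f) (deriv (deriv f) C.det) C.det :=
    (((hf'.differentiableOn (by norm_num)) C.det hC).differentiableAt
      (Ioi_mem_nhds hC)).hasDerivAt
  have hc : HasFDerivAt (fun X : E n => deriv f X.det)
      ((deriv (deriv f) C.det) • T C.adjugate) C := hdd.comp_hasFDerivAt C hdet
  have hσ : HasFDerivAt (fun X : E n => deriv f X.det * X.det)
      (deriv f C.det • T C.adjugate +
        C.det • ((deriv (deriv f) C.det) • T C.adjugate)) C := hc.mul hdet
  have hinv : HasFDerivAt (fun X : E n => Ring.inverse X)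
      (-(ContinuousLinearMap.mulLeftRight ℝ (E n) ↑u⁻¹ ↑u⁻¹)) C :=
    hu1 ▸ hasFDerivAt_ringInverse u
  have hTinv : HasFDerivAt (fun X : E n => T (Ring.inverse X))
      (T.comp (-(ContinuousLinearMap.mulLeftRight ℝ (E n) ↑u⁻¹ ↑u⁻¹))) C :=
    T.hasFDerivAt.comp C hinv
  have hD : HasFDerivAt (D f)
      ((deriv f C.det * C.det) • (T.comp (-(ContinuousLinearMap.mulLeftRight ℝ (E n) ↑u⁻¹ ↑u⁻¹)))
        + (deriv f C.det • T C.adjugate +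
            C.det • ((deriv (deriv f) C.det) • T C.adjugate)).smulRight (T (Ring.inverse C))) C :=
    hσ.smul hTinv
  rw [hD.fderiv]
  have hadj : C.adjugate = C.det • C⁻¹ := adjugate_eq_det_smul_inv C hdu
  have hri : Ring.inverse C = C⁻¹ := (Matrix.nonsing_inv_eq_ringInverse C).symm
  simp only [ContinuousLinearMap.add_apply, ContinuousLinearMap.smul_apply,
    ContinuousLinearMap.comp_apply, ContinuousLinearMap.neg_apply,
    ContinuousLinearMap.mulLeftRight_apply, ContinuousLinearMap.smulRight_apply,
    T_apply, hui, hri, hadj, Matrix.smul_mul, Matrix.trace_smul, smul_eq_mul,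
    Matrix.neg_mul, Matrix.trace_neg, Matrix.mul_assoc]
  ring

end SFDAux

theorem second_fderiv_f_det (n : ℕ) (f : ℝ → ℝ) (hf : ContDiffOn ℝ 2 f (Set.Ioi 0))
    (C H : Matrix (Fin n) (Fin n) ℝ) (hC : C.PosDef) (hH : H.IsSymm) :
    iteratedFDeriv ℝ 2 (fun X : Matrix (Fin n) (Fin n) ℝ => f X.det) C ![H, H] =
      C.det * ((deriv (deriv f) C.det * C.det + deriv f C.det) * (tinner C⁻¹ H) ^ 2 -
        deriv f C.det * tinner (H * C⁻¹) (C⁻¹ * H)) := by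
  have h2 := SFDAux.fderiv_fderiv_g f hf C hC.det_pos H
  rw [iteratedFDeriv_two_apply]
  simp only [Matrix.cons_val_zero, Matrix.cons_val_one, Matrix.head_cons]
  erw [h2]
  have hHt : Hᵀ = H := hH
  have hCs : Cᵀ = C := by
    have := hC.1
    simpa [Matrix.IsHermitian, Matrix.conjTranspose_eq_transpose_of_trivial] using this
  have hCt : (C⁻¹)ᵀ = C⁻¹ := by rw [Matrix.transpose_nonsing_inv, hCs]
  have ht1 : tinner C⁻¹ H = (C⁻¹ * H).trace := by rw [tinner, hHt]
  have ht2 : tinner (H * C⁻¹) (C⁻¹ * H) = (C⁻¹ * H * (C⁻¹ * H)).trace := by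
    rw [tinner, Matrix.transpose_mul, hHt, hCt]
    rw [Matrix.trace_mul_comm]
    simp only [Matrix.mul_assoc]
    rw [Matrix.trace_mul_comm H]
    simp [Matrix.mul_assoc]
  rw [ht1, ht2]
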